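/- For every a in (0,π/4], 1 ≤ cos(a)·E(√(1-tan²a)) ≤ π/(2√2), with Φ(π/4) = π/(2√2) and lim_{a→0+} Φ(a) = 1. -/

import Mathlib

open Real Set

noncomputable def ellK (k : ℝ) : ℝ :=
  ∫ θ in (0:ℝ)..(Real.pi/2), 1 / Real.sqrt (1 - k^2 * Real.sin θ ^ 2)

noncomputable def ellE (k : ℝ) : ℝ :=
  ∫ θ in (0:ℝ)..(Real.pi/2), Real.sqrt (1 - k^2 * Real.sin θ ^ 2)

lemma cont_f (c s : ℝ) :
    Continuous fun θ : ℝ => Real.sqrt (c^2 * Real.cos θ^2 + s^2 * Real.sin θ^2) := by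
  fun_prop

lemma phi_eq {a : ℝ} (ha : a ∈ Ioc (0:ℝ) (Real.pi/4)) :
    Real.cos a * ellE (Real.sqrt (1 - Real.tan a ^ 2)) =
      ∫ θ in (0:ℝ)..(Real.pi/2),
        Real.sqrt (Real.cos a^2 * Real.cos θ^2 + Real.sin a^2 * Real.sin θ^2) := by
  obtain ⟨h0, h4⟩ := ha
  have hpi := Real.pi_pos
  have hc : 0 < Real.cos a :=
    Real.cos_pos_of_mem_Ioo ⟨by linarith, by linarith⟩
  have hs : 0 ≤ Real.sin a := Real.sin_nonneg_of_nonneg_of_le_pi (by linarith) (by linarith)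
  have ht0 : 0 ≤ Real.tan a := by
    rw [Real.tan_eq_sin_div_cos]; positivity
  have ht1 : Real.tan a ≤ 1 := by
    have := Real.tan_pi_div_four
    calc Real.tan a ≤ Real.tan (Real.pi/4) :=
          Real.strictMonoOn_tan.monotoneOn ⟨by linarith, by linarith⟩
            ⟨by linarith, by linarith⟩ h4
      _ = 1 := Real.tan_pi_div_four
  have h1t : 0 ≤ 1 - Real.tan a ^ 2 := by nlinarith
  rw [ellE, ← intervalIntegral.integral_const_mul]
  refine intervalIntegral.integral_congr fun θ _ => ?_
  show Real.cos a * Real.sqrt (1 - Real.sqrt (1 - Real.tan a ^ 2) ^ 2 * Real.sin θ ^ 2) = _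
  rw [Real.sq_sqrt h1t]
  have hmul : Real.cos a * Real.sqrt (1 - (1 - Real.tan a ^ 2) * Real.sin θ ^ 2)
      = Real.sqrt (Real.cos a ^ 2 * (1 - (1 - Real.tan a ^ 2) * Real.sin θ ^ 2)) := by
    rw [Real.sqrt_mul (sq_nonneg _), Real.sqrt_sq hc.le]
  rw [hmul]
  congr 1
  have hkey : Real.cos a ^ 2 * (1 - (1 - Real.tan a ^ 2) * Real.sin θ ^ 2)
      = Real.cos a^2 * Real.cos θ^2 + Real.sin a^2 * Real.sin θ^2 := by
    rw [Real.tan_eq_sin_div_cos, div_pow]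
    have h1 := Real.sin_sq_add_cos_sq θ
    have h2 := Real.sin_sq_add_cos_sq a
    field_simp
    nlinarith [h1, h2]
  linarith [hkey]

lemma int_lower (a : ℝ) :
    1 ≤ ∫ θ in (0:ℝ)..(Real.pi/2),
        Real.sqrt (Real.cos a^2 * Real.cos θ^2 + Real.sin a^2 * Real.sin θ^2) := by
  have hpi := Real.pi_pos
  have h1 : (∫ θ in (0:ℝ)..(Real.pi/2),
      (Real.cos a^2 * Real.cos θ + Real.sin a^2 * Real.sin θ)) = 1 := by
    rw [intervalIntegral.integral_add
        ((show Continuous fun θ => Real.cos a^2 * Real.cos θ from continuous_const.mul Real.continuous_cos).intervalIntegrable _ _)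
        ((show Continuous fun θ => Real.sin a^2 * Real.sin θ from continuous_const.mul Real.continuous_sin).intervalIntegrable _ _),
      intervalIntegral.integral_const_mul, intervalIntegral.integral_const_mul,
      integral_cos, integral_sin]
    simp [Real.sin_pi_div_two, Real.cos_pi_div_two]
  rw [← h1]
  refine intervalIntegral.integral_mono_on (by linarith)
    ((Continuous.intervalIntegrable (by fun_prop) _ _))
    ((cont_f _ _).intervalIntegrable _ _) fun θ hθ => ?_
  have hx : 0 ≤ Real.cos θ := Real.cos_nonneg_of_mem_Icc ⟨by linarith [hθ.1], hθ.2⟩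
  have hy : 0 ≤ Real.sin θ := Real.sin_nonneg_of_nonneg_of_le_pi hθ.1 (by linarith [hθ.2])
  rw [Real.le_sqrt (by positivity) (by positivity)]
  nlinarith [Real.sin_sq_add_cos_sq θ, Real.sin_sq_add_cos_sq a,
    sq_nonneg (Real.cos a * Real.sin a * (Real.cos θ - Real.sin θ)),
    sq_nonneg (Real.cos a * Real.sin a)]

lemma int_sq (a : ℝ) :
    (∫ θ in (0:ℝ)..(Real.pi/2),
      (Real.cos a^2 * Real.cos θ^2 + Real.sin a^2 * Real.sin θ^2)) = Real.pi/4 := by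
  rw [intervalIntegral.integral_add
      ((show Continuous fun θ => Real.cos a^2 * Real.cos θ^2 from continuous_const.mul (Real.continuous_cos.pow 2)).intervalIntegrable _ _)
      ((show Continuous fun θ => Real.sin a^2 * Real.sin θ^2 from continuous_const.mul (Real.continuous_sin.pow 2)).intervalIntegrable _ _),
    intervalIntegral.integral_const_mul, intervalIntegral.integral_const_mul,
    integral_cos_sq, integral_sin_sq]
  simp only [Real.sin_pi_div_two, Real.cos_pi_div_two, Real.sin_zero, Real.cos_zero]
  linear_combination (Real.pi/4) * Real.sin_sq_add_cos_sq a

lemma int_upper (a : ℝ) :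
    (∫ θ in (0:ℝ)..(Real.pi/2),
        Real.sqrt (Real.cos a^2 * Real.cos θ^2 + Real.sin a^2 * Real.sin θ^2))
      ≤ Real.pi / (2 * Real.sqrt 2) := by
  have hs2 : Real.sqrt 2 ^ 2 = 2 := Real.sq_sqrt (by norm_num)
  have hs2p : (0:ℝ) < Real.sqrt 2 := Real.sqrt_pos.mpr (by norm_num)
  have hpi := Real.pi_pos
  have h1 : (∫ θ in (0:ℝ)..(Real.pi/2),
      (Real.sqrt 2 / 2 * ((Real.cos a^2 * Real.cos θ^2 + Real.sin a^2 * Real.sin θ^2) + 1/2)))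
      = Real.pi / (2 * Real.sqrt 2) := by
    rw [intervalIntegral.integral_const_mul, intervalIntegral.integral_add
        (Continuous.intervalIntegrable (by fun_prop) _ _)
        (intervalIntegrable_const), int_sq, intervalIntegral.integral_const]
    rw [eq_div_iff (by positivity)]
    simp only [smul_eq_mul]
    nlinarith
  rw [← h1]
  refine intervalIntegral.integral_mono_on (by linarith)
    ((cont_f _ _).intervalIntegrable _ _)
    (Continuous.intervalIntegrable (by fun_prop) _ _) fun θ hθ => ?_
  set X := Real.cos a^2 * Real.cos θ^2 + Real.sin a^2 * Real.sin θ^2 with hX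
  have hX0 : 0 ≤ X := by positivity
  nlinarith [sq_nonneg (Real.sqrt X - Real.sqrt 2 / 2), Real.sq_sqrt hX0,
    Real.sqrt_nonneg X]

lemma int_upper2 {a : ℝ} (hc : 0 ≤ Real.cos a) (hs : 0 ≤ Real.sin a) :
    (∫ θ in (0:ℝ)..(Real.pi/2),
        Real.sqrt (Real.cos a^2 * Real.cos θ^2 + Real.sin a^2 * Real.sin θ^2))
      ≤ Real.cos a + Real.sin a := by
  have hpi := Real.pi_pos
  have h1 : (∫ θ in (0:ℝ)..(Real.pi/2),
      (Real.cos a * Real.cos θ + Real.sin a * Real.sin θ)) = Real.cos a + Real.sin a := by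
    rw [intervalIntegral.integral_add
        ((show Continuous fun θ => Real.cos a * Real.cos θ from continuous_const.mul Real.continuous_cos).intervalIntegrable _ _)
        ((show Continuous fun θ => Real.sin a * Real.sin θ from continuous_const.mul Real.continuous_sin).intervalIntegrable _ _),
      intervalIntegral.integral_const_mul, intervalIntegral.integral_const_mul,
      integral_cos, integral_sin]
    simp [Real.sin_pi_div_two, Real.cos_pi_div_two]
  rw [← h1]
  refine intervalIntegral.integral_mono_on (by linarith)
    ((cont_f _ _).intervalIntegrable _ _)
    (Continuous.intervalIntegrable (by fun_prop) _ _) fun θ hθ => ?_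
  have hx : 0 ≤ Real.cos θ := Real.cos_nonneg_of_mem_Icc ⟨by linarith [hθ.1], hθ.2⟩
  have hy : 0 ≤ Real.sin θ := Real.sin_nonneg_of_nonneg_of_le_pi hθ.1 (by linarith [hθ.2])
  have h2 : Real.cos a^2 * Real.cos θ^2 + Real.sin a^2 * Real.sin θ^2
      ≤ (Real.cos a * Real.cos θ + Real.sin a * Real.sin θ) ^ 2 := by
    nlinarith [mul_nonneg (mul_nonneg hc hx) (mul_nonneg hs hy)]
  calc Real.sqrt (Real.cos a^2 * Real.cos θ^2 + Real.sin a^2 * Real.sin θ^2)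
      ≤ Real.sqrt ((Real.cos a * Real.cos θ + Real.sin a * Real.sin θ) ^ 2) :=
        Real.sqrt_le_sqrt h2
    _ = Real.cos a * Real.cos θ + Real.sin a * Real.sin θ := Real.sqrt_sq (by positivity)

theorem stmt9 :
    (∀ a ∈ Ioc (0:ℝ) (Real.pi/4),
      1 ≤ Real.cos a * ellE (Real.sqrt (1 - Real.tan a ^ 2)) ∧
      Real.cos a * ellE (Real.sqrt (1 - Real.tan a ^ 2)) ≤ Real.pi / (2 * Real.sqrt 2)) ∧
    Real.cos (Real.pi/4) * ellE (Real.sqrt (1 - Real.tan (Real.pi/4) ^ 2)) =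
      Real.pi / (2 * Real.sqrt 2) ∧
    Filter.Tendsto (fun a : ℝ => Real.cos a * ellE (Real.sqrt (1 - Real.tan a ^ 2)))
      (nhdsWithin 0 (Ioi 0)) (nhds 1) := by
  have hpi := Real.pi_pos
  have hmain : ∀ a ∈ Ioc (0:ℝ) (Real.pi/4),
      1 ≤ Real.cos a * ellE (Real.sqrt (1 - Real.tan a ^ 2)) ∧
      Real.cos a * ellE (Real.sqrt (1 - Real.tan a ^ 2)) ≤ Real.pi / (2 * Real.sqrt 2) := by
    intro a ha
    rw [phi_eq ha]
    exact ⟨int_lower a, int_upper a⟩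
  refine ⟨hmain, ?_, ?_⟩
  · have h4 : Real.pi/4 ∈ Ioc (0:ℝ) (Real.pi/4) := ⟨by linarith, le_rfl⟩
    rw [Real.tan_pi_div_four]
    have : Real.sqrt (1 - 1 ^ 2) = 0 := by norm_num
    rw [this, ellE]
    have hE : (∫ θ in (0:ℝ)..(Real.pi/2),
        Real.sqrt (1 - (0:ℝ)^2 * Real.sin θ ^ 2)) = Real.pi/2 := by
      simp
    rw [hE, Real.cos_pi_div_four]
    have hs2 : Real.sqrt 2 ^ 2 = 2 := Real.sq_sqrt (by norm_num)
    have hs2p : (0:ℝ) < Real.sqrt 2 := Real.sqrt_pos.mpr (by norm_num)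
    rw [eq_div_iff (by positivity)]
    nlinarith
  · have hmem : Ioc (0:ℝ) (Real.pi/4) ∈ nhdsWithin (0:ℝ) (Ioi 0) :=
      Ioc_mem_nhdsGT (by linarith)
    refine tendsto_of_tendsto_of_tendsto_of_le_of_le'
      (tendsto_const_nhds)
      (h := fun a : ℝ => Real.cos a + Real.sin a) ?_ ?_ ?_
    · have : Filter.Tendsto (fun a : ℝ => Real.cos a + Real.sin a) (nhds 0) (nhds 1) := by
        have := (Real.continuous_cos.add Real.continuous_sin).tendsto 0
        simpa using (show Filter.Tendsto (fun a : ℝ => Real.cos a + Real.sin a) (nhds 0) (nhds (Real.cos 0 + Real.sin 0)) from this)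
      exact this.mono_left nhdsWithin_le_nhds
    · filter_upwards [hmem] with a ha
      exact (hmain a ha).1
    · filter_upwards [hmem] with a ha
      rw [phi_eq ha]
      have hc : 0 ≤ Real.cos a :=
        (Real.cos_pos_of_mem_Ioo ⟨by linarith [ha.1], by linarith [ha.2]⟩).le
      have hs : 0 ≤ Real.sin a :=
        Real.sin_nonneg_of_nonneg_of_le_pi (le_of_lt ha.1) (by linarith [ha.2])
      exact int_upper2 hc hs
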